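/- Let G be a simple graph, i a vertex of G, and k a nonnegative integer. Then (G,i) allows the nullity pair (k,k) with the SNIP if and only if (G,i) allows the nullity pair (k+1,k) with the SNIP. -/

import Mathlib

open Matrix

/-- The nullity of a square real matrix: the dimension of its kernel. -/
noncomputable def nullity {V : Type*} [Fintype V] (A : Matrix V V ℝ) : ℕ :=
  Module.finrank ℝ (LinearMap.ker A.mulVecLin)

/-- The principal submatrix of `A` obtained by deleting row and column `i`. -/
def deleteRC {V : Type*} (A : Matrix V V ℝ) (i : V) :
    Matrix {v : V // v ≠ i} {v : V // v ≠ i} ℝ :=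
  A.submatrix (fun v => (v : V)) (fun v => (v : V))

/-- `A` has the `i`-strong nullity interlacing property. -/
def HasSNIP {V : Type*} [Fintype V] [DecidableEq V] (A : Matrix V V ℝ) (i : V) : Prop :=
  ∀ X : Matrix V V ℝ, X.IsSymm → A.hadamard X = 0 →
    (1 : Matrix V V ℝ).hadamard X = 0 →
    (∀ r, r ≠ i → ∀ c, (A * X) r c = 0) → X = 0

/-- `A` has the strong Arnold property. -/
def HasSAP {V : Type*} [Fintype V] [DecidableEq V] (A : Matrix V V ℝ) : Prop :=
  ∀ X : Matrix V V ℝ, X.IsSymm → A.hadamard X = 0 →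
    (1 : Matrix V V ℝ).hadamard X = 0 → A * X = 0 → X = 0

/-- `A` belongs to `𝒮(G)`. -/
def InSG {V : Type*} (G : SimpleGraph V) (A : Matrix V V ℝ) : Prop :=
  A.IsSymm ∧ ∀ u v : V, u ≠ v → (A u v ≠ 0 ↔ G.Adj u v)

/-- `(G,i)` allows the nullity pair `(k,l)`. -/
def Allows {V : Type*} [Fintype V] [DecidableEq V] (G : SimpleGraph V) (i : V)
    (k l : ℕ) : Prop :=
  ∃ A : Matrix V V ℝ, InSG G A ∧ nullity A = k ∧ nullity (deleteRC A i) = l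

/-- `(G,i)` allows the nullity pair `(k,l)` with the SNIP. -/
def AllowsSNIP {V : Type*} [Fintype V] [DecidableEq V] (G : SimpleGraph V) (i : V)
    (k l : ℕ) : Prop :=
  ∃ A : Matrix V V ℝ, InSG G A ∧ nullity A = k ∧ nullity (deleteRC A i) = l ∧ HasSNIP A i

/-! ### Auxiliary material -/

set_option linter.unusedSectionVars false

section Aux

variable {V : Type*} [Fintype V] [DecidableEq V]

lemma mem_span_single_iff (i : V) (y : V → ℝ) :
    y ∈ Submodule.span ℝ {(Pi.single i 1 : V → ℝ)} ↔ ∀ j, j ≠ i → y j = 0 := by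
  rw [Submodule.mem_span_singleton]
  constructor
  · rintro ⟨c, rfl⟩ j hj
    simp [Pi.single_apply, hj]
  · intro h
    refine ⟨y i, funext fun j => ?_⟩
    by_cases hj : j = i
    · subst hj; simp
    · simp [Pi.single_apply, hj, h j hj]

lemma stdBasis_mulVec (i : V) (t : ℝ) (x : V → ℝ) :
    (Matrix.single i i t).mulVec x = Pi.single i (t * x i) := by
  funext j
  simp [Matrix.mulVec, dotProduct, Matrix.single, Pi.single_apply, ite_and,
    Finset.sum_ite_eq, eq_comm]

lemma single_dot (i : V) (c : ℝ) (y : V → ℝ) :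
    (Pi.single i c : V → ℝ) ⬝ᵥ y = c * y i := by
  simp [dotProduct, Pi.single_apply, Finset.sum_ite_eq, ite_and]

lemma mulVec_dot_symm (A : Matrix V V ℝ) (hA : A.IsSymm) (x y : V → ℝ) :
    A.mulVec x ⬝ᵥ y = x ⬝ᵥ A.mulVec y := by
  rw [dotProduct_mulVec, ← Matrix.mulVec_transpose, hA]

lemma symm_perp_mem_range (A : Matrix V V ℝ) (hA : A.IsSymm) (b : V → ℝ)
    (hb : ∀ x, A.mulVec x = 0 → b ⬝ᵥ x = 0) : ∃ v, A.mulVec v = b := by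
  classical
  let T : EuclideanSpace ℝ V →ₗ[ℝ] EuclideanSpace ℝ V :=
    { toFun := fun x => WithLp.toLp 2 (A.mulVec x)
      map_add' := fun x y => by simp [Matrix.mulVec_add]
      map_smul' := fun c x => by simp [Matrix.mulVec_smul] }
  have hinner : ∀ x y : EuclideanSpace ℝ V, (inner ℝ x y : ℝ) = x ⬝ᵥ y := by
    intro x y
    simp [PiLp.inner_apply, dotProduct, mul_comm]
  have hle : LinearMap.range T ≤ (LinearMap.ker T)ᗮ := by
    rintro _ ⟨z, rfl⟩
    rw [Submodule.mem_orthogonal]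
    intro u hu
    rw [LinearMap.mem_ker] at hu
    have : T z = A.mulVec z := rfl
    rw [hinner, this, ← mulVec_dot_symm A hA u (z : V → ℝ)]
    have hu' : A.mulVec u = 0 := congrArg WithLp.ofLp hu
    rw [hu']
    simp
  have heq : LinearMap.range T = (LinearMap.ker T)ᗮ := by
    apply Submodule.eq_of_le_of_finrank_eq hle
    have h1 := LinearMap.finrank_range_add_finrank_ker T
    have h2 := Submodule.finrank_add_finrank_orthogonal (𝕜 := ℝ) (LinearMap.ker T)
    omega
  have hbmem : (show EuclideanSpace ℝ V from WithLp.toLp 2 b) ∈ (LinearMap.ker T)ᗮ := by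
    rw [Submodule.mem_orthogonal]
    intro u hu
    rw [LinearMap.mem_ker] at hu
    rw [hinner]
    rw [dotProduct_comm]
    exact hb u (congrArg WithLp.ofLp hu)
  rw [← heq] at hbmem
  obtain ⟨v, hv⟩ := hbmem
  exact ⟨v, congrArg WithLp.ofLp hv⟩

/-- The functional `x ↦ (A x)_i`. -/
def phiF (A : Matrix V V ℝ) (i : V) : (V → ℝ) →ₗ[ℝ] ℝ := (LinearMap.proj i).comp A.mulVecLin

/-- The functional `x ↦ x_i`. -/
def psiF (i : V) : (V → ℝ) →ₗ[ℝ] ℝ := LinearMap.proj i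

/-- The preimage of `span {e_i}` under `A`. -/
def Kp (A : Matrix V V ℝ) (i : V) : Submodule ℝ (V → ℝ) :=
  (Submodule.span ℝ {(Pi.single i 1 : V → ℝ)}).comap A.mulVecLin

lemma mem_Kp (A : Matrix V V ℝ) (i : V) (x : V → ℝ) :
    x ∈ Kp A i ↔ ∀ j, j ≠ i → A.mulVec x j = 0 := by
  rw [Kp, Submodule.mem_comap, Matrix.mulVecLin_apply, mem_span_single_iff]

lemma ker_shift (A : Matrix V V ℝ) (i : V) (t : ℝ) :
    LinearMap.ker (A + Matrix.single i i t).mulVecLin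
      = Kp A i ⊓ LinearMap.ker (phiF A i + t • psiF i) := by
  ext x
  rw [LinearMap.mem_ker, Submodule.mem_inf, LinearMap.mem_ker, Matrix.mulVecLin_apply,
    Matrix.add_mulVec, stdBasis_mulVec, mem_Kp]
  constructor
  · intro h
    have h' : ∀ j, A.mulVec x j + (Pi.single i (t * x i) : V → ℝ) j = 0 := fun j => by
      simpa using congrFun h j
    constructor
    · intro j hj
      have := h' j
      simpa [Pi.single_apply, hj] using this
    · simpa [phiF, psiF, Pi.single_apply] using h' i
  · rintro ⟨h1, h2⟩
    funext j
    by_cases hj : j = i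
    · have h2' : A.mulVec x i + t * x i = 0 := by simpa [phiF, psiF] using h2
      simp only [hj, Pi.add_apply, Pi.single_apply, if_pos rfl, Pi.zero_apply]
      exact h2'
    · simp [Pi.single_apply, hj, h1 j hj]

/-- Extension by zero. -/
def ext0 (i : V) : ({v : V // v ≠ i} → ℝ) →ₗ[ℝ] (V → ℝ) where
  toFun x := fun v => if h : v = i then 0 else x ⟨v, h⟩
  map_add' x y := by funext v; by_cases h : v = i <;> simp [h]
  map_smul' c x := by funext v; by_cases h : v = i <;> simp [h]

lemma mulVec_ext0 (A : Matrix V V ℝ) (i : V) (x : {v : V // v ≠ i} → ℝ) (j : V) (hj : j ≠ i) :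
    A.mulVec (ext0 i x) j = (deleteRC A i).mulVec x ⟨j, hj⟩ := by
  classical
  have : (deleteRC A i).mulVec x ⟨j, hj⟩ = ∑ v : {v : V // v ≠ i}, A j (v : V) * x v := by
    simp [deleteRC, Matrix.mulVec, dotProduct, Matrix.submatrix_apply]
  rw [this]
  have hsub : ∑ v : {v : V // v ≠ i}, A j (v : V) * x v
      = ∑ v ∈ Finset.univ.erase i, A j v * ext0 i x v := by
    rw [Finset.sum_subtype (p := fun v => v ≠ i) (Finset.univ.erase i)
      (by intro v; simp) (fun v => A j v * ext0 i x v)]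
    apply Finset.sum_congr rfl
    intro v _
    simp [ext0, v.2]
  rw [hsub, Matrix.mulVec, dotProduct, ← Finset.sum_erase_add _ _ (Finset.mem_univ i)]
  simp [ext0]

lemma nullity_deleteRC (A : Matrix V V ℝ) (i : V) :
    nullity (deleteRC A i) = Module.finrank ℝ ↥(Kp A i ⊓ LinearMap.ker (psiF i)) := by
  classical
  set S := Kp A i ⊓ LinearMap.ker (psiF i) with hS
  have hmem : ∀ x : {v : V // v ≠ i} → ℝ,
      x ∈ LinearMap.ker (deleteRC A i).mulVecLin ↔ ext0 i x ∈ S := by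
    intro x
    rw [LinearMap.mem_ker, Matrix.mulVecLin_apply, hS, Submodule.mem_inf, mem_Kp,
      LinearMap.mem_ker]
    constructor
    · intro h
      refine ⟨fun j hj => ?_, ?_⟩
      · rw [mulVec_ext0 A i x j hj, h]; rfl
      · simp [psiF, ext0]
    · rintro ⟨h1, _⟩
      funext v
      have := h1 (v : V) v.2
      rw [mulVec_ext0 A i x (v : V) v.2] at this
      simpa using this
  let L : LinearMap.ker (deleteRC A i).mulVecLin →ₗ[ℝ] S :=
    LinearMap.codRestrict S ((ext0 i).comp (LinearMap.ker (deleteRC A i).mulVecLin).subtype)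
      (fun c => (hmem c).1 c.2)
  have hbij : Function.Bijective L := by
    constructor
    · intro a b hab
      ext v
      have : ext0 i (a : {v : V // v ≠ i} → ℝ) = ext0 i (b : {v : V // v ≠ i} → ℝ) :=
        congrArg Subtype.val hab
      have := congrFun this (v : V)
      simpa [ext0, v.2] using this
    · rintro ⟨y, hy⟩
      have hyi : y i = 0 := by
        have := hy.2
        simpa [psiF] using this
      refine ⟨⟨fun v => y (v : V), ?_⟩, ?_⟩
      · rw [hmem]
        have : ext0 i (fun v => y (v : V)) = y := by
          funext v
          by_cases h : v = i
          · subst h; simp [ext0, hyi]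
          · simp [ext0, h]
        rw [this]; exact hy
      · apply Subtype.ext
        funext v
        by_cases h : v = i
        · subst h; simp [L, ext0, hyi]
        · simp [L, ext0, h]
  exact LinearEquiv.finrank_eq (LinearEquiv.ofBijective L hbij)

lemma finrank_inf_ker {M : Type*} [AddCommGroup M] [Module ℝ M]
    (W : Submodule ℝ M) (f : M →ₗ[ℝ] ℝ) :
    Module.finrank ℝ ↥(W ⊓ LinearMap.ker f)
      = Module.finrank ℝ ↥(LinearMap.ker (f.domRestrict W)) := by
  rw [LinearMap.ker_domRestrict]
  have h1 : Submodule.comap W.subtype (LinearMap.ker f)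
      = Submodule.comap W.subtype (W ⊓ LinearMap.ker f) := by
    rw [Submodule.comap_inf, Submodule.comap_subtype_self, top_inf_eq]
  rw [h1]
  exact (Submodule.comapSubtypeEquivOfLe inf_le_left).finrank_eq.symm

lemma functional_prop {M : Type*} [AddCommGroup M] [Module ℝ M] (φ ψ : M →ₗ[ℝ] ℝ)
    (h : ∀ x y, φ x * ψ y = φ y * ψ x) (hψ : ψ ≠ 0) : ∃ c : ℝ, φ = c • ψ := by
  obtain ⟨y, hy⟩ : ∃ y, ψ y ≠ 0 := by
    by_contra h'
    push_neg at h'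
    exact hψ (LinearMap.ext fun y => h' y)
  refine ⟨φ y / ψ y, LinearMap.ext fun x => ?_⟩
  have : (φ y / ψ y) * ψ x = φ x := by
    field_simp
    linarith [h x y]
  simp [this]

lemma finrank_ker_functional {M : Type*} [AddCommGroup M] [Module ℝ M]
    [FiniteDimensional ℝ M] (ψ : M →ₗ[ℝ] ℝ) (hψ : ψ ≠ 0) :
    Module.finrank ℝ ↥(LinearMap.ker ψ) + 1 = Module.finrank ℝ M := by
  obtain ⟨y, hy⟩ : ∃ y, ψ y ≠ 0 := by
    by_contra h'
    push_neg at h'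
    exact hψ (LinearMap.ext fun y => h' y)
  have hr : LinearMap.range ψ = ⊤ := by
    rw [LinearMap.range_eq_top]
    intro r
    exact ⟨(r / ψ y) • y, by rw [LinearMap.map_smul, smul_eq_mul]; field_simp⟩
  have h1 := LinearMap.finrank_range_add_finrank_ker ψ
  rw [hr, finrank_top, Module.finrank_self] at h1
  omega

lemma domRestrict_eq (A : Matrix V V ℝ) (i : V) (t : ℝ) :
    (phiF A i + t • psiF i).domRestrict (Kp A i)
      = (phiF A i).domRestrict (Kp A i) + t • (psiF i).domRestrict (Kp A i) := by
  ext x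
  simp

lemma nullity_shift (A : Matrix V V ℝ) (i : V) (t : ℝ) :
    nullity (A + Matrix.single i i t)
      = Module.finrank ℝ ↥(LinearMap.ker ((phiF A i).domRestrict (Kp A i)
          + t • (psiF i).domRestrict (Kp A i))) := by
  rw [nullity, ker_shift, finrank_inf_ker, domRestrict_eq]

lemma nullity_eq (A : Matrix V V ℝ) (i : V) :
    nullity A = Module.finrank ℝ ↥(LinearMap.ker ((phiF A i).domRestrict (Kp A i))) := by
  have h := nullity_shift A i 0
  rw [zero_smul, add_zero] at h
  simpa using h

lemma prop_restricted (A : Matrix V V ℝ) (hA : A.IsSymm) (i : V)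
    (x y : V → ℝ) (hx : x ∈ Kp A i) (hy : y ∈ Kp A i) :
    A.mulVec x i * y i = A.mulVec y i * x i := by
  have key : ∀ u w : V → ℝ, (∀ j, j ≠ i → A.mulVec u j = 0) →
      A.mulVec u ⬝ᵥ w = A.mulVec u i * w i := by
    intro u w hu
    rw [dotProduct, Finset.sum_eq_single i]
    · intro b _ hb
      rw [hu b hb, zero_mul]
    · intro h
      exact absurd (Finset.mem_univ i) h
  calc A.mulVec x i * y i = A.mulVec x ⬝ᵥ y := (key x y ((mem_Kp A i x).1 hx)).symm
    _ = x ⬝ᵥ A.mulVec y := mulVec_dot_symm A hA x y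
    _ = A.mulVec y ⬝ᵥ x := dotProduct_comm _ _
    _ = A.mulVec y i * x i := key y x ((mem_Kp A i y).1 hy)

lemma nullity_shift_up (A : Matrix V V ℝ) (hA : A.IsSymm) (i : V) (k : ℕ)
    (hB : Module.finrank ℝ ↥(Kp A i ⊓ LinearMap.ker (psiF i)) = k)
    (hk : nullity A = k) :
    ∃ t : ℝ, nullity (A + Matrix.single i i t) = k + 1 := by
  classical
  set W := Kp A i with hW0
  set φ' := (phiF A i).domRestrict W with hφ'
  set ψ' := (psiF i).domRestrict W with hψ'
  have hBdim : Module.finrank ℝ ↥(LinearMap.ker ψ') = k := by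
    rw [← finrank_inf_ker]; exact hB
  have hkdim : Module.finrank ℝ ↥(LinearMap.ker φ') = k := by
    rw [← nullity_eq A i]; exact hk
  by_cases hψ : ψ' = 0
  · exfalso
    have hWk : Module.finrank ℝ ↥W = k := by
      have htop : LinearMap.ker ψ' = ⊤ := LinearMap.ker_eq_top.2 hψ
      rw [htop, finrank_top] at hBdim
      exact hBdim
    have hφtop : LinearMap.ker φ' = ⊤ :=
      Submodule.eq_top_of_finrank_eq (by rw [hkdim, hWk])
    have hφ0 : φ' = 0 := LinearMap.ker_eq_top.1 hφtop
    have hside : ∀ x, A.mulVec x = 0 → (Pi.single i 1 : V → ℝ) ⬝ᵥ x = 0 := by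
      intro x hx
      have hxW : x ∈ W := by
        rw [hW0, mem_Kp]
        intro j hj
        rw [hx]
        rfl
      have hxi : ψ' ⟨x, hxW⟩ = 0 := by rw [hψ]; rfl
      have hx0 : x i = 0 := hxi
      rw [single_dot, hx0, mul_zero]
    obtain ⟨v, hv⟩ := symm_perp_mem_range A hA (Pi.single i 1) hside
    have hvW : v ∈ W := by
      rw [hW0, mem_Kp]
      intro j hj
      rw [hv]
      exact Pi.single_eq_of_ne hj 1
    have h1 : φ' ⟨v, hvW⟩ = 1 := by
      have : A.mulVec v i = 1 := by rw [hv]; simp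
      simpa [hφ', phiF] using this
    rw [hφ0] at h1
    exact absurd h1 (by norm_num)
  · obtain ⟨c, hc⟩ := functional_prop φ' ψ'
      (fun x y => prop_restricted A hA i x y x.2 y.2) hψ
    have hWdim : Module.finrank ℝ ↥W = k + 1 := by
      rw [← finrank_ker_functional ψ' hψ, hBdim]
    have hcne : c ≠ 0 := by
      rintro rfl
      rw [zero_smul] at hc
      have htop : LinearMap.ker φ' = ⊤ := LinearMap.ker_eq_top.2 hc
      rw [htop, finrank_top, hWdim] at hkdim
      omega
    refine ⟨-c, ?_⟩
    rw [nullity_shift A i (-c)]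
    have hzero : φ' + (-c) • ψ' = 0 := by
      rw [hc, ← add_smul]
      simp
    rw [← hφ', ← hψ', hzero, LinearMap.ker_zero, finrank_top, hWdim]

lemma nullity_shift_down (A : Matrix V V ℝ) (i : V) (k : ℕ)
    (hB : Module.finrank ℝ ↥(Kp A i ⊓ LinearMap.ker (psiF i)) = k)
    (hk : nullity A = k + 1) :
    ∃ t : ℝ, nullity (A + Matrix.single i i t) = k := by
  classical
  set W := Kp A i with hW0
  set φ' := (phiF A i).domRestrict W with hφ'
  set ψ' := (psiF i).domRestrict W with hψ'
  have hBdim : Module.finrank ℝ ↥(LinearMap.ker ψ') = k := by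
    rw [← finrank_inf_ker]; exact hB
  have hkdim : Module.finrank ℝ ↥(LinearMap.ker φ') = k + 1 := by
    rw [← nullity_eq A i]; exact hk
  by_cases hψ : ψ' = 0
  · exfalso
    have hWk : Module.finrank ℝ ↥W = k := by
      have htop : LinearMap.ker ψ' = ⊤ := LinearMap.ker_eq_top.2 hψ
      rw [htop, finrank_top] at hBdim
      exact hBdim
    have hle := Submodule.finrank_le (LinearMap.ker φ')
    rw [hkdim, hWk] at hle
    omega
  · have hWdim : Module.finrank ℝ ↥W = k + 1 := by
      rw [← finrank_ker_functional ψ' hψ, hBdim]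
    have hφtop : LinearMap.ker φ' = ⊤ :=
      Submodule.eq_top_of_finrank_eq (by rw [hkdim, hWdim])
    have hφ0 : φ' = 0 := LinearMap.ker_eq_top.1 hφtop
    refine ⟨1, ?_⟩
    rw [nullity_shift A i 1]
    have hone : φ' + (1 : ℝ) • ψ' = ψ' := by
      rw [hφ0, one_smul, zero_add]
    rw [← hφ', ← hψ', hone, hBdim]

lemma stdBasis_offdiag {V : Type*} [DecidableEq V] {i u v : V} (t : ℝ)
    (h : ¬(u = i ∧ v = i)) : Matrix.single i i t u v = 0 := by
  simp only [Matrix.single, Matrix.of_apply, ite_eq_right_iff, and_imp]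
  intro h1 h2
  exact absurd ⟨h1.symm, h2.symm⟩ h

lemma deleteRC_shift (A : Matrix V V ℝ) (i : V) (t : ℝ) :
    deleteRC (A + Matrix.single i i t) i = deleteRC A i := by
  ext u v
  simp only [deleteRC, Matrix.submatrix_apply, Matrix.add_apply]
  rw [stdBasis_offdiag t (fun hc => u.2 hc.1), add_zero]

lemma InSG_shift {G : SimpleGraph V} {A : Matrix V V ℝ} (hA : InSG G A) (i : V) (t : ℝ) :
    InSG G (A + Matrix.single i i t) := by
  obtain ⟨hsymm, hadj⟩ := hA
  constructor
  · rw [Matrix.IsSymm, Matrix.transpose_add, hsymm]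
    congr 1
    ext a b
    rw [Matrix.transpose_apply]
    by_cases h1 : i = a <;> by_cases h2 : i = b <;>
      simp [Matrix.single, Matrix.of_apply, h1, h2]
  · intro u v huv
    have hz : Matrix.single i i t u v = 0 :=
      stdBasis_offdiag t (fun hc => huv (hc.1.trans hc.2.symm))
    rw [Matrix.add_apply, hz, add_zero]
    exact hadj u v huv

lemma HasSNIP_shift {A : Matrix V V ℝ} {i : V} (h : HasSNIP A i) (t : ℝ) :
    HasSNIP (A + Matrix.single i i t) i := by
  intro X hX hH h1 hR
  have hdiag : ∀ u, X u u = 0 := by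
    intro u
    have := congrFun (congrFun h1 u) u
    simpa using this
  apply h X hX _ h1
  · intro r hr c
    have hstd : (Matrix.single i i t * X) r c = 0 := by
      rw [Matrix.mul_apply]
      apply Finset.sum_eq_zero
      intro j _
      rw [stdBasis_offdiag t (fun hc => hr hc.1), zero_mul]
    have h2 := hR r hr c
    rw [Matrix.add_mul, Matrix.add_apply, hstd, add_zero] at h2
    exact h2
  · ext u v
    have hHuv := congrFun (congrFun hH u) v
    rw [Matrix.hadamard_apply, Matrix.add_apply] at hHuv
    rw [Matrix.hadamard_apply, Matrix.zero_apply]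
    by_cases huv : u = i ∧ v = i
    · obtain ⟨h1', h2'⟩ := huv
      rw [h1', h2', hdiag i, mul_zero]
    · rw [stdBasis_offdiag t huv, add_zero] at hHuv
      exact hHuv

end Aux

/-- `(G,i)` allows `(k,k)` with the SNIP iff it allows `(k+1,k)` with the SNIP. -/
theorem stmt8 {V : Type*} [Fintype V] [DecidableEq V] (G : SimpleGraph V) (i : V)
    (k : ℕ) : AllowsSNIP G i k k ↔ AllowsSNIP G i (k + 1) k := by
  constructor
  · rintro ⟨A, hG, hk, hB, hS⟩
    have hB' : Module.finrank ℝ ↥(Kp A i ⊓ LinearMap.ker (psiF i)) = k := by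
      rw [← nullity_deleteRC]; exact hB
    obtain ⟨t, ht⟩ := nullity_shift_up A hG.1 i k hB' hk
    refine ⟨A + Matrix.single i i t, InSG_shift hG i t, ht, ?_, HasSNIP_shift hS t⟩
    rw [deleteRC_shift, hB]
  · rintro ⟨A, hG, hk, hB, hS⟩
    have hB' : Module.finrank ℝ ↥(Kp A i ⊓ LinearMap.ker (psiF i)) = k := by
      rw [← nullity_deleteRC]; exact hB
    obtain ⟨t, ht⟩ := nullity_shift_down A i k hB' hk
    refine ⟨A + Matrix.single i i t, InSG_shift hG i t, ht, ?_, HasSNIP_shift hS t⟩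
    rw [deleteRC_shift, hB]
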